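/- Fix an integer n ≥ 1 and a real number a > 0. The n+1 functions ξ_0, ξ_1, …, ξ_n, viewed as functions on the interval (a,∞), are linearly independent over ℂ: if c_0,…,c_n ∈ ℂ satisfy Σ_{k=0}^n c_k·ξ_k(h) = 0 for all h > a, then c_k = 0 for every k. -/

import Mathlib

open Complex Filter Topology

/-- The generating series `F_n(α,h) = h^{-(n+1)α} Σ_d h^{-(n+1)d} Γ(α+d+1)^{-(n+1)}`
of hypergeometric type. -/
noncomputable def mirrorF (n : ℕ) (α : ℂ) (h : ℝ) : ℂ :=
  Complex.exp (-((n : ℂ) + 1) * α * (Real.log h : ℂ)) *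
    ∑' d : ℕ, ((h : ℂ) ^ ((n + 1) * d))⁻¹ * ((Complex.Gamma (α + d + 1))⁻¹) ^ (n + 1)

/-- `ξ_k(h)`, the `k`-th Taylor coefficient at `α = 0` of `α ↦ F_n(α,h)`. -/
noncomputable def mirrorXi (n k : ℕ) (h : ℝ) : ℂ :=
  (1 / (k.factorial : ℂ)) * iteratedDeriv k (fun α : ℂ => mirrorF n α h) 0

noncomputable def mirrorGterm (n : ℕ) (h : ℝ) (α : ℂ) (d : ℕ) : ℂ :=
  ((h : ℂ) ^ ((n + 1) * d))⁻¹ * ((Complex.Gamma (α + d + 1))⁻¹) ^ (n + 1)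

lemma mirrorF_eq (n : ℕ) (α : ℂ) (h : ℝ) :
    mirrorF n α h = Complex.exp (-((n : ℂ) + 1) * α * (Real.log h : ℂ)) *
      ∑' d : ℕ, mirrorGterm n h α d := rfl

/-- Uniform bound for the reciprocal Gamma function on shifted disks. -/
lemma gammaInv_bound (r : ℕ) : ∃ M : ℝ, 1 ≤ M ∧
    ∀ (d : ℕ) (α : ℂ), ‖α‖ ≤ r → ‖(Complex.Gamma (α + d + 1))⁻¹‖ ≤ M := by
  obtain ⟨M0, hM0⟩ := (isCompact_closedBall (0:ℂ) (2*r+4)).exists_bound_of_continuousOn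
    (Complex.differentiable_one_div_Gamma.continuous.continuousOn)
  refine ⟨max M0 1, le_max_right _ _, ?_⟩
  intro d
  induction d with
  | zero =>
    intro α hα
    refine le_trans (hM0 _ ?_) (le_max_left _ _)
    rw [Metric.mem_closedBall, dist_zero_right, Nat.cast_zero, add_zero]
    have h1 : ‖α + 1‖ ≤ ‖α‖ + 1 := by
      simpa using norm_add_le α 1
    have h2 : (0:ℝ) ≤ (r:ℝ) := Nat.cast_nonneg r
    linarith
  | succ d IH =>
    intro α hα
    by_cases hd : (d : ℝ) ≤ r + 1
    · refine le_trans (hM0 _ ?_) (le_max_left _ _)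
      rw [Metric.mem_closedBall, dist_zero_right]
      have e1 : (α + (↑(d+1):ℂ) + 1) = α + (((d:ℂ)+1) + 1) := by push_cast; ring
      have h1 : ‖α + (((d:ℂ)+1) + 1)‖ ≤ ‖α‖ + (‖((d:ℂ)+1)‖ + ‖(1:ℂ)‖) :=
        le_trans (norm_add_le _ _) (by gcongr; exact norm_add_le _ _)
      have h2 : ‖((d:ℂ)+1)‖ = (d:ℝ) + 1 := by
        rw [show ((d:ℂ)+1) = ((d+1 : ℕ):ℂ) by push_cast; ring, Complex.norm_natCast]
        push_cast; ring
      rw [e1]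
      rw [h2, norm_one] at h1
      linarith
    · push_neg at hd
      have hz : (1:ℝ) ≤ ‖α + (d:ℂ) + 1‖ := by
        have h1 : ‖((d:ℂ)+1)‖ - ‖α + (d:ℂ) + 1‖ ≤ ‖α‖ := by
          have := norm_sub_norm_le ((d:ℂ)+1) (α + (d:ℂ) + 1)
          simpa [show ((d:ℂ)+1) - (α + (d:ℂ) + 1) = -α by ring] using this
        have h2 : ‖((d:ℂ)+1)‖ = (d:ℝ) + 1 := by
          rw [show ((d:ℂ)+1) = ((d+1 : ℕ):ℂ) by push_cast; ring, Complex.norm_natCast]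
          push_cast; ring
        linarith
      have hz0 : α + (d:ℂ) + 1 ≠ 0 := by
        intro e; rw [e] at hz; simp at hz; linarith
      have key : (α + (↑(d+1):ℂ) + 1) = (α + (d:ℂ) + 1) + 1 := by push_cast; ring
      rw [key, Complex.Gamma_add_one _ hz0, mul_inv, norm_mul, norm_inv]
      calc ‖α + (d:ℂ) + 1‖⁻¹ * ‖(Complex.Gamma (α + (d:ℂ) + 1))⁻¹‖
          ≤ 1 * max M0 1 := by
            apply mul_le_mul _ (IH α hα) (norm_nonneg _) zero_le_one
            rw [inv_le_one_iff₀]; right; exact hz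
        _ = max M0 1 := one_mul _

lemma gterm_norm_le {n : ℕ} {h : ℝ} (hh : 3 ≤ h) {M : ℝ} (hM : 1 ≤ M)
    {α : ℂ} {d : ℕ} (hg : ‖(Complex.Gamma (α + d + 1))⁻¹‖ ≤ M) :
    ‖mirrorGterm n h α d‖ ≤ M ^ (n+1) * (h⁻¹) ^ d := by
  have h0 : (0:ℝ) < h := by linarith
  rw [mirrorGterm, norm_mul, norm_inv, norm_pow]
  rw [norm_pow]
  have h1 : ‖(h:ℂ)‖ = h := by
    rw [Complex.norm_real, Real.norm_eq_abs, abs_of_pos h0]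
  rw [h1]
  have h2 : (h ^ ((n+1)*d))⁻¹ ≤ (h⁻¹) ^ d := by
    rw [← inv_pow]
    exact pow_le_pow_of_le_one (by positivity)
      (by rw [inv_le_one_iff₀]; right; linarith)
      (Nat.le_mul_of_pos_left d (Nat.succ_pos n))
  have h3 : ‖(Complex.Gamma (α + d + 1))⁻¹‖ ^ (n+1) ≤ M ^ (n+1) :=
    pow_le_pow_left₀ (norm_nonneg _) hg _
  calc (h ^ ((n+1)*d))⁻¹ * ‖(Complex.Gamma (α + d + 1))⁻¹‖ ^ (n+1)
      ≤ (h⁻¹)^d * M^(n+1) := by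
        apply mul_le_mul h2 h3 (by positivity) (by positivity)
    _ = M ^ (n+1) * (h⁻¹) ^ d := by ring


lemma gterm_summable {n : ℕ} {h : ℝ} (hh : 3 ≤ h) (α : ℂ) {M : ℝ} (hM : 1 ≤ M)
    (hg : ∀ d : ℕ, ‖(Complex.Gamma (α + d + 1))⁻¹‖ ≤ M) :
    Summable (mirrorGterm n h α) := by
  have h0 : (0:ℝ) < h := by linarith
  apply Summable.of_norm
  apply Summable.of_nonneg_of_le (fun d => norm_nonneg _)
    (fun d => gterm_norm_le hh hM (hg d))
  apply Summable.mul_left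
  apply summable_geometric_of_lt_one (by positivity)
  rw [inv_lt_one₀ h0]; linarith

lemma mirrorF_differentiable {n : ℕ} {h : ℝ} (hh : 3 ≤ h) :
    Differentiable ℂ (fun α : ℂ => mirrorF n α h) := by
  have h0 : (0:ℝ) < h := by linarith
  have hG : Differentiable ℂ (fun α : ℂ => ∑' d : ℕ, mirrorGterm n h α d) := by
    intro α₀
    obtain ⟨r, hr⟩ := exists_nat_gt ‖α₀‖
    obtain ⟨M, hM1, hM⟩ := gammaInv_bound r
    have hdo : DifferentiableOn ℂ (fun α : ℂ => ∑' d : ℕ, mirrorGterm n h α d)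
        (Metric.ball 0 r) := by
      apply differentiableOn_tsum_of_summable_norm
        (u := fun d => M ^ (n+1) * (h⁻¹) ^ d)
      · apply Summable.mul_left
        apply summable_geometric_of_lt_one (by positivity)
        rw [inv_lt_one₀ h0]; linarith
      · intro d
        apply Differentiable.differentiableOn
        apply Differentiable.const_mul
        apply Differentiable.pow
        exact Complex.differentiable_one_div_Gamma.comp
          ((differentiable_id.add_const _).add_const _)
      · exact Metric.isOpen_ball
      · intro d w hw
        exact gterm_norm_le hh hM1
          (hM d w (le_of_lt (by simpa [Metric.mem_ball, dist_zero_right] using hw)))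
    exact hdo.differentiableAt
      (Metric.isOpen_ball.mem_nhds (by simpa [Metric.mem_ball, dist_zero_right] using hr))
  have hexp : Differentiable ℂ
      (fun α : ℂ => Complex.exp (-((n : ℂ) + 1) * α * (Real.log h : ℂ))) := by
    apply Complex.differentiable_exp.comp
    exact (differentiable_id.const_mul _).mul_const _
  exact hexp.mul hG

lemma differentiable_iteratedDeriv' {f : ℂ → ℂ} (hf : Differentiable ℂ f) (k : ℕ) :
    Differentiable ℂ (iteratedDeriv k f) := by
  have h2 := (contDiff_iff_iteratedDeriv (n := (⊤:ℕ∞))).mp hf.contDiff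
  exact h2.2 k (by simp)

lemma iteratedDeriv_comp_const_mul' {f : ℂ → ℂ} (hf : Differentiable ℂ f) (c : ℂ) (k : ℕ) :
    iteratedDeriv k (fun x => f (c * x)) = fun x => c ^ k * iteratedDeriv k f (c * x) := by
  induction k with
  | zero => simp [iteratedDeriv_zero]
  | succ k IH =>
    rw [iteratedDeriv_succ, IH, iteratedDeriv_succ]
    funext x
    have hd : HasDerivAt (fun x : ℂ => iteratedDeriv k f (c * x))
        (deriv (iteratedDeriv k f) (c * x) * c) x := by
      have h1 := ((differentiable_iteratedDeriv' hf k) (c * x)).hasDerivAt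
      have h2 : HasDerivAt (fun x : ℂ => c * x) c x := by
        simpa using (hasDerivAt_id x).const_mul c
      exact h1.comp x h2
    rw [(HasDerivAt.const_mul (c ^ k) hd).deriv]
    ring


lemma mirrorH_tendsto (n : ℕ) :
    TendstoLocallyUniformlyOn
      (fun (h : ℝ) (β : ℂ) => mirrorF n (((Real.log h : ℝ) : ℂ)⁻¹ * β) h)
      (fun β => Complex.exp (-((n : ℂ) + 1) * β)) Filter.atTop (Metric.ball 0 2) := by
  apply TendstoUniformlyOn.tendstoLocallyUniformlyOn
  rw [Metric.tendstoUniformlyOn_iff]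
  intro ε hε
  obtain ⟨M, hM1, hM⟩ := gammaInv_bound 3
  set E := Real.exp (2 * ((n:ℝ) + 1)) with hE
  have hE0 : 0 < E := Real.exp_pos _
  set ε1 : ℝ := ε / (2 * E) with hε1def
  have hε1 : 0 < ε1 := by positivity
  have hgc : ContinuousAt (fun α : ℂ => ((Complex.Gamma (α + 1))⁻¹) ^ (n+1)) 0 := by
    apply Continuous.continuousAt
    exact (Complex.differentiable_one_div_Gamma.comp
      (differentiable_id.add_const 1)).continuous.pow _
  obtain ⟨δ, hδ0, hδ⟩ := Metric.continuousAt_iff.mp hgc ε1 hε1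
  have hg0 : ((Complex.Gamma ((0:ℂ) + 1))⁻¹) ^ (n+1) = 1 := by
    rw [zero_add, Complex.Gamma_one]; simp
  have evL : Filter.Tendsto (fun h : ℝ => 2 * (Real.log h)⁻¹) Filter.atTop (𝓝 0) := by
    simpa using (Real.tendsto_log_atTop.inv_tendsto_atTop).const_mul (2:ℝ)
  have evT : Filter.Tendsto (fun h : ℝ => M ^ (n+1) * 3 * h⁻¹) Filter.atTop (𝓝 0) := by
    simpa using tendsto_inv_atTop_zero.const_mul (M ^ (n+1) * 3)
  filter_upwards [Filter.eventually_ge_atTop (3:ℝ),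
    evL.eventually_lt_const hδ0, evT.eventually_lt_const hε1] with h h3 hLδ hT β hβ
  have h0 : (0:ℝ) < h := by linarith
  have hL1 : (1:ℝ) ≤ Real.log h := by
    rw [Real.le_log_iff_exp_le h0]
    calc Real.exp 1 ≤ 2.7182818286 := le_of_lt Real.exp_one_lt_d9
      _ ≤ h := by linarith
  set L := Real.log h with hLdef
  have hL0 : ((L : ℝ) : ℂ) ≠ 0 := by
    rw [Complex.ofReal_ne_zero]; linarith
  set α := ((L : ℝ) : ℂ)⁻¹ * β with hα
  have hβ2 : ‖β‖ ≤ 2 := le_of_lt (by simpa [Metric.mem_ball, dist_zero_right] using hβ)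
  have hLnorm : ‖((L : ℝ) : ℂ)‖ = L := by
    rw [Complex.norm_real, Real.norm_eq_abs, abs_of_pos (by linarith)]
  have hαn : ‖α‖ ≤ 2 * L⁻¹ := by
    rw [hα, norm_mul, norm_inv, hLnorm]
    calc L⁻¹ * ‖β‖ ≤ L⁻¹ * 2 := by
          apply mul_le_mul_of_nonneg_left hβ2 (by positivity)
      _ = 2 * L⁻¹ := mul_comm _ _
  have hLinv1 : L⁻¹ ≤ 1 := by
    rw [inv_le_one_iff₀]; right; linarith
  have hα3 : ‖α‖ ≤ ((3:ℕ):ℝ) := by push_cast; linarith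
  have hαδ : ‖α‖ < δ := lt_of_le_of_lt hαn hLδ
  have hsum : Summable (mirrorGterm n h α) := gterm_summable h3 α hM1 (fun d => hM d α hα3)
  have hF : mirrorF n α h
      = Complex.exp (-((n : ℂ) + 1) * β) * ∑' d, mirrorGterm n h α d := by
    rw [mirrorF_eq]
    congr 2
    rw [hα]
    field_simp
    rw [hLdef]; ring
  have hsplit : ∑' d, mirrorGterm n h α d
      = mirrorGterm n h α 0 + ∑' d, mirrorGterm n h α (d+1) := Summable.tsum_eq_zero_add hsum
  have hterm0 : mirrorGterm n h α 0 = ((Complex.Gamma (α + 1))⁻¹) ^ (n+1) := by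
    rw [mirrorGterm]
    norm_num
  have hb : ∀ d : ℕ, ‖mirrorGterm n h α (d+1)‖ ≤ (M ^ (n+1) * h⁻¹) * ((3:ℝ)⁻¹) ^ d := by
    intro d
    calc ‖mirrorGterm n h α (d+1)‖ ≤ M ^ (n+1) * (h⁻¹) ^ (d+1) :=
          gterm_norm_le h3 hM1 (hM (d+1) α hα3)
      _ = (M ^ (n+1) * h⁻¹) * (h⁻¹) ^ d := by ring
      _ ≤ (M ^ (n+1) * h⁻¹) * ((3:ℝ)⁻¹) ^ d := by
          have h1 : h⁻¹ ≤ (3:ℝ)⁻¹ := inv_anti₀ (by norm_num) h3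
          gcongr
  have hsn : Summable (fun d : ℕ => (M ^ (n+1) * h⁻¹) * ((3:ℝ)⁻¹) ^ d) :=
    (summable_geometric_of_lt_one (by norm_num) (by norm_num)).mul_left _
  have htail : ‖∑' d, mirrorGterm n h α (d+1)‖ ≤ M ^ (n+1) * 3 * h⁻¹ := by
    have hsn2 : Summable (fun d : ℕ => ‖mirrorGterm n h α (d+1)‖) :=
      Summable.of_nonneg_of_le (fun d => norm_nonneg _) hb hsn
    calc ‖∑' d, mirrorGterm n h α (d+1)‖ ≤ ∑' d, ‖mirrorGterm n h α (d+1)‖ :=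
          norm_tsum_le_tsum_norm hsn2
      _ ≤ ∑' d : ℕ, ((M ^ (n+1) * h⁻¹) * ((3:ℝ)⁻¹) ^ d) := Summable.tsum_le_tsum hb hsn2 hsn
      _ = (M ^ (n+1) * h⁻¹) * ∑' d : ℕ, ((3:ℝ)⁻¹) ^ d := tsum_mul_left
      _ = (M ^ (n+1) * h⁻¹) * (1 - 3⁻¹)⁻¹ := by
          rw [tsum_geometric_of_lt_one (by norm_num) (by norm_num)]
      _ ≤ M ^ (n+1) * 3 * h⁻¹ := by
          have hMp : (0:ℝ) ≤ M ^ (n+1) := by positivity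
          have hhp : (0:ℝ) ≤ h⁻¹ := by positivity
          nlinarith
  have hhead : ‖((Complex.Gamma (α + 1))⁻¹) ^ (n+1) - 1‖ < ε1 := by
    have := hδ (show dist α 0 < δ by rwa [dist_zero_right])
    rwa [dist_eq_norm, hg0] at this
  have hexpE : ‖Complex.exp (-((n : ℂ) + 1) * β)‖ ≤ E := by
    rw [Complex.norm_exp]
    apply Real.exp_le_exp.mpr
    calc (-((n : ℂ) + 1) * β).re ≤ ‖-((n : ℂ) + 1) * β‖ := Complex.re_le_norm _
      _ = ‖((n : ℂ) + 1)‖ * ‖β‖ := by rw [norm_mul, norm_neg]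
      _ ≤ ((n:ℝ) + 1) * 2 := by
          have : ‖((n : ℂ) + 1)‖ = (n:ℝ) + 1 := by
            rw [show ((n:ℂ) + 1) = ((n + 1 : ℕ) : ℂ) by push_cast; ring, Complex.norm_natCast]
            push_cast; ring
          rw [this]
          apply mul_le_mul_of_nonneg_left hβ2 (by positivity)
      _ = 2 * ((n:ℝ) + 1) := by ring
  rw [dist_eq_norm, hF, hsplit, hterm0]
  have hrw : Complex.exp (-((n : ℂ) + 1) * β)
      - Complex.exp (-((n : ℂ) + 1) * β) * (((Complex.Gamma (α + 1))⁻¹) ^ (n+1)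
        + ∑' d, mirrorGterm n h α (d+1))
      = Complex.exp (-((n : ℂ) + 1) * β) * ((1 - ((Complex.Gamma (α + 1))⁻¹) ^ (n+1))
        - ∑' d, mirrorGterm n h α (d+1)) := by ring
  rw [hrw, norm_mul]
  have hX : ‖(1 - ((Complex.Gamma (α + 1))⁻¹) ^ (n+1)) - ∑' d, mirrorGterm n h α (d+1)‖
      < ε1 + ε1 := by
    calc ‖(1 - ((Complex.Gamma (α + 1))⁻¹) ^ (n+1)) - ∑' d, mirrorGterm n h α (d+1)‖
        ≤ ‖1 - ((Complex.Gamma (α + 1))⁻¹) ^ (n+1)‖ + ‖∑' d, mirrorGterm n h α (d+1)‖ :=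
          norm_sub_le _ _
      _ < ε1 + ε1 := by
          apply add_lt_add_of_lt_of_le
          · rwa [norm_sub_rev]
          · exact le_of_lt (lt_of_le_of_lt htail hT)
  calc ‖Complex.exp (-((n : ℂ) + 1) * β)‖
        * ‖(1 - ((Complex.Gamma (α + 1))⁻¹) ^ (n+1)) - ∑' d, mirrorGterm n h α (d+1)‖
      ≤ E * ‖(1 - ((Complex.Gamma (α + 1))⁻¹) ^ (n+1)) - ∑' d, mirrorGterm n h α (d+1)‖ :=
        mul_le_mul_of_nonneg_right hexpE (norm_nonneg _)
    _ < E * (ε1 + ε1) := by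
        apply mul_lt_mul_of_pos_left hX hE0
    _ = ε := by
        rw [hε1def]
        field_simp
        ring


lemma iterH_tendsto (n k : ℕ) :
    Tendsto (fun h : ℝ =>
        iteratedDeriv k (fun β : ℂ => mirrorF n (((Real.log h : ℝ) : ℂ)⁻¹ * β) h) 0)
      atTop (𝓝 ((-((n : ℂ) + 1)) ^ k)) := by
  have hdiffH : ∀ᶠ h : ℝ in atTop, ∀ j : ℕ, DifferentiableOn ℂ
      (iteratedDeriv j (fun β : ℂ => mirrorF n (((Real.log h : ℝ) : ℂ)⁻¹ * β) h))
      (Metric.ball 0 2) := by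
    filter_upwards [eventually_ge_atTop (3:ℝ)] with h h3 j
    have hd : Differentiable ℂ (fun β : ℂ => mirrorF n (((Real.log h : ℝ) : ℂ)⁻¹ * β) h) :=
      (mirrorF_differentiable h3 (n := n)).comp (differentiable_id.const_mul _)
    exact (differentiable_iteratedDeriv' hd j).differentiableOn
  have key : ∀ j : ℕ, TendstoLocallyUniformlyOn
      (fun h : ℝ => iteratedDeriv j (fun β : ℂ => mirrorF n (((Real.log h : ℝ) : ℂ)⁻¹ * β) h))
      (iteratedDeriv j (fun β : ℂ => Complex.exp (-((n : ℂ) + 1) * β)))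
      atTop (Metric.ball 0 2) := by
    intro j
    induction j with
    | zero => simpa [iteratedDeriv_zero] using mirrorH_tendsto n
    | succ j IH =>
      have hstep := IH.deriv (hdiffH.mono (fun h hh => hh j)) Metric.isOpen_ball
      simp only [iteratedDeriv_succ]
      exact hstep
  have h0mem : (0:ℂ) ∈ Metric.ball (0:ℂ) 2 := Metric.mem_ball_self (by norm_num)
  have := (key k).tendsto_at h0mem
  rw [iteratedDeriv_cexp_const_mul] at this
  simpa using this

lemma xi_tendsto (n k : ℕ) :
    Tendsto (fun h : ℝ => mirrorXi n k h * (((Real.log h : ℝ) : ℂ))⁻¹ ^ k)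
      atTop (𝓝 ((-((n : ℂ) + 1)) ^ k / (k.factorial : ℂ))) := by
  have hlim := (iterH_tendsto n k).const_mul ((1:ℂ) / (k.factorial : ℂ))
  have hval : (1:ℂ) / (k.factorial : ℂ) * (-((n : ℂ) + 1)) ^ k
      = (-((n : ℂ) + 1)) ^ k / (k.factorial : ℂ) := by ring
  rw [hval] at hlim
  apply Tendsto.congr' _ hlim
  filter_upwards [eventually_ge_atTop (3:ℝ)] with h h3
  have hF := mirrorF_differentiable h3 (n := n)
  have e := congrFun
    (iteratedDeriv_comp_const_mul' hF (((Real.log h : ℝ) : ℂ))⁻¹ k) 0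
  simp only [mul_zero] at e
  rw [e, mirrorXi]
  ring

theorem mirrorXi_linearIndependent (n : ℕ) (hn : 1 ≤ n) (a : ℝ) (ha : 0 < a)
    (c : Fin (n + 1) → ℂ)
    (hc : ∀ h : ℝ, a < h → ∑ k : Fin (n + 1), c k * mirrorXi n k h = 0) :
    ∀ k : Fin (n + 1), c k = 0 := by
  have key : ∀ k : Fin (n + 1), (∀ j : Fin (n + 1), (k:ℕ) < (j:ℕ) → c j = 0) → c k = 0 := by
    intro k hk
    set A : ℂ := (-((n : ℂ) + 1)) ^ (k:ℕ) / ((k:ℕ).factorial : ℂ) with hA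
    have hAne : A ≠ 0 := by
      apply div_ne_zero
      · apply pow_ne_zero
        exact neg_ne_zero.mpr (Nat.cast_add_one_ne_zero n)
      · exact_mod_cast Nat.factorial_ne_zero _
    have hlim : Tendsto (fun h : ℝ =>
        ∑ j : Fin (n + 1), c j * mirrorXi n j h * (((Real.log h : ℝ) : ℂ))⁻¹ ^ (k:ℕ))
        atTop (𝓝 (c k * A)) := by
      have hsum : c k * A = ∑ j : Fin (n + 1), (if j = k then c k * A else 0) := by
        rw [Finset.sum_ite_eq' Finset.univ k (fun _ => c k * A)]
        simp
      rw [hsum]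
      apply tendsto_finset_sum
      intro j _
      rcases lt_trichotomy (j:ℕ) (k:ℕ) with hj | hj | hj
      · have hne : j ≠ k := by
          intro e; rw [e] at hj; exact lt_irrefl _ hj
        simp only [if_neg hne]
        have hsplit : ∀ h : ℝ, c j * mirrorXi n j h * (((Real.log h : ℝ) : ℂ))⁻¹ ^ (k:ℕ)
            = c j * ((mirrorXi n j h * (((Real.log h : ℝ) : ℂ))⁻¹ ^ (j:ℕ))
              * (((Real.log h : ℝ) : ℂ))⁻¹ ^ ((k:ℕ) - (j:ℕ))) := by
          intro h
          have hexp : (((Real.log h : ℝ) : ℂ))⁻¹ ^ (k:ℕ)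
              = (((Real.log h : ℝ) : ℂ))⁻¹ ^ (j:ℕ)
                * (((Real.log h : ℝ) : ℂ))⁻¹ ^ ((k:ℕ) - (j:ℕ)) := by
            rw [← pow_add, Nat.add_sub_cancel' (le_of_lt hj)]
          rw [hexp]
          ring
        have hz : Tendsto (fun h : ℝ => (((Real.log h : ℝ) : ℂ))⁻¹ ^ ((k:ℕ) - (j:ℕ)))
            atTop (𝓝 0) := by
          have h1 : Tendsto (fun h : ℝ => (((Real.log h : ℝ) : ℂ))⁻¹) atTop (𝓝 0) := by
            have h2 := (Complex.continuous_ofReal.tendsto 0).comp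
              Real.tendsto_log_atTop.inv_tendsto_atTop
            simpa [Function.comp_def, Complex.ofReal_inv] using h2
          have h3 := h1.pow ((k:ℕ) - (j:ℕ))
          simpa [zero_pow (show (k:ℕ) - (j:ℕ) ≠ 0 by omega)] using h3
        have hres := ((xi_tendsto n j).mul hz).const_mul (c j)
        simp only [mul_zero] at hres
        apply Tendsto.congr (fun h => (hsplit h).symm) hres
      · have hjk : j = k := Fin.ext hj
        subst hjk
        simp only [if_pos rfl]
        have := (xi_tendsto n j).const_mul (c j)
        rw [hA]
        apply Tendsto.congr (fun h => by ring) this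
      · have hcj : c j = 0 := hk j hj
        have hne : j ≠ k := by
          intro e; rw [e] at hj; exact lt_irrefl _ hj
        simp only [if_neg hne, hcj, zero_mul]
        exact tendsto_const_nhds
    have hzero : Tendsto (fun h : ℝ =>
        ∑ j : Fin (n + 1), c j * mirrorXi n j h * (((Real.log h : ℝ) : ℂ))⁻¹ ^ (k:ℕ))
        atTop (𝓝 0) := by
      apply Tendsto.congr' _ (tendsto_const_nhds (x := (0:ℂ)))
      filter_upwards [eventually_gt_atTop a] with h hh
      rw [← Finset.sum_mul, hc h hh, zero_mul]
    have h0 : c k * A = 0 := tendsto_nhds_unique hlim hzero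
    rcases mul_eq_zero.mp h0 with h | h
    · exact h
    · exact absurd h hAne
  have main : ∀ m : ℕ, ∀ k : Fin (n + 1), n - (k:ℕ) < m → c k = 0 := by
    intro m
    induction m with
    | zero => intro k hk; omega
    | succ m IH =>
      intro k hk
      apply key
      intro j hj
      apply IH
      have := j.isLt
      omega
  intro k
  exact main (n + 1) k (by omega)
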